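/- Let k → A →^ι H →^π B → k be an exact sequence of Hopf algebras over a field k, i.e. ι : A → H is an injective Hopf algebra morphism, π : H → B is a surjective Hopf algebra morphism, and Ker(π) = ι(A)⁺H, where ι(A)⁺H is the linear span of the products ι(a)h with a ∈ A, ε_A(a) = 0, and h ∈ H. Then for any commutative k-algebra R the induced sequence of groups 1 → Alg(B,R) →^{π*} Alg(H,R) →^{ι*} Alg(A,R) is exact; explicitly: (i) the map π* : g ↦ g∘π is injective on algebra morphisms, and (ii) an algebra morphism f : H → R satisfies f ∘ ι = η_R ∘ ε_A if and only if f = g ∘ π for some algebra morphism g : B → R. -/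
import Mathlib


/-- An exact sequence of Hopf algebras
`k → A →^ι H →^π B → k` (ι injective, π surjective,
`Ker(π) = ι(A)⁺H`) induces, for every commutative algebra `R`, an exact
sequence of groups `1 → Alg(B,R) → Alg(H,R) → Alg(A,R)`:
(i) `π* : g ↦ g ∘ π` is injective, and
(ii) `f ∘ ι = η_R ∘ ε_A` iff `f = g ∘ π` for some algebra morphism `g`. -/
theorem hopf_exact_sequence_induces_alg_exact_sequence
    {k : Type*} [Field k] {A H B : Type*}
    [Ring A] [Ring H] [Ring B]
    [HopfAlgebra k A] [HopfAlgebra k H] [HopfAlgebra k B]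
    (ι : A →ₐc[k] H) (π : H →ₐc[k] B)
    (hι : Function.Injective ι) (hπ : Function.Surjective π)
    (hker : ∀ h : H, π h = 0 ↔
      h ∈ Submodule.span k {z : H | ∃ (a : A) (x : H),
        Coalgebra.counit (R := k) a = 0 ∧ z = ι a * x})
    (R : Type*) [CommRing R] [Algebra k R] :
    (∀ g g' : B →ₐ[k] R, (∀ x : H, g (π x) = g' (π x)) → g = g') ∧
    (∀ f : H →ₐ[k] R,
      (∀ a : A, f (ι a) = algebraMap k R (Coalgebra.counit (R := k) a)) ↔
      (∃ g : B →ₐ[k] R, ∀ x : H, f x = g (π x))) := by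
  constructor
  · intro g g' h
    ext b
    obtain ⟨x, rfl⟩ := hπ b
    exact h x
  · intro f
    constructor
    · intro hf
      -- f vanishes on the span, hence on ker π
      have hspan : ∀ z ∈ Submodule.span k {z : H | ∃ (a : A) (x : H),
          Coalgebra.counit (R := k) a = 0 ∧ z = ι a * x}, f z = 0 := by
        intro z hz
        induction hz using Submodule.span_induction with
        | mem w hw =>
          obtain ⟨a, v, ha, rfl⟩ := hw
          rw [map_mul, hf a, ha, map_zero, zero_mul]
        | zero => simp
        | add u v _ _ hu hv => rw [map_add, hu, hv, add_zero]
        | smul c u _ hu => rw [map_smul, hu, smul_zero]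
      have key : ∀ x y : H, π x = π y → f x = f y := by
        intro x y hxy
        have hz : π (x - y) = 0 := by rw [map_sub, hxy, sub_self]
        have hzero : f (x - y) = 0 := hspan _ ((hker (x - y)).mp hz)
        rw [map_sub, sub_eq_zero] at hzero
        exact hzero
      refine ⟨{ toFun := fun b => f (Function.surjInv hπ b),
                map_one' := ?_, map_mul' := ?_, map_zero' := ?_, map_add' := ?_,
                commutes' := ?_ }, ?_⟩
      · show f (Function.surjInv hπ 1) = 1
        rw [key (Function.surjInv hπ 1) 1 (by rw [Function.surjInv_eq hπ, map_one]),
          map_one]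
      · intro x y
        show f (Function.surjInv hπ (x * y)) = _ * _
        rw [key (Function.surjInv hπ (x * y)) (Function.surjInv hπ x * Function.surjInv hπ y)
            (by rw [Function.surjInv_eq hπ, map_mul, Function.surjInv_eq hπ,
              Function.surjInv_eq hπ]), map_mul]
      · show f (Function.surjInv hπ 0) = 0
        rw [key (Function.surjInv hπ 0) 0 (by rw [Function.surjInv_eq hπ, map_zero]),
          map_zero]
      · intro x y
        show f (Function.surjInv hπ (x + y)) = _ + _
        rw [key (Function.surjInv hπ (x + y)) (Function.surjInv hπ x + Function.surjInv hπ y)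
            (by rw [Function.surjInv_eq hπ, map_add, Function.surjInv_eq hπ,
              Function.surjInv_eq hπ]), map_add]
      · intro r
        show f (Function.surjInv hπ (algebraMap k B r)) = algebraMap k R r
        rw [key (Function.surjInv hπ (algebraMap k B r)) (algebraMap k H r)
            (by rw [Function.surjInv_eq hπ, AlgHomClass.commutes]), AlgHomClass.commutes]
      · intro x
        exact key x (Function.surjInv hπ (π x)) (Function.surjInv_eq hπ (π x)).symm
    · rintro ⟨g, hg⟩ a
      -- π (ι a) = algebraMap k B (ε a)
      have hcounit1 : Coalgebra.counit (R := k) (1 : A) = 1 := Bialgebra.counit_one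
      have ha' : Coalgebra.counit (R := k) (a - Coalgebra.counit (R := k) a • (1 : A)) = 0 := by
        rw [map_sub, map_smul, hcounit1, smul_eq_mul, mul_one, sub_self]
      have hmem : ι (a - Coalgebra.counit (R := k) a • (1 : A)) ∈
          Submodule.span k {z : H | ∃ (a : A) (x : H),
            Coalgebra.counit (R := k) a = 0 ∧ z = ι a * x} :=
        Submodule.subset_span ⟨_, 1, ha', (mul_one _).symm⟩
      have hπι : π (ι (a - Coalgebra.counit (R := k) a • (1 : A))) = 0 := (hker _).mpr hmem
      simp only [map_sub, map_smul, map_one] at hπι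
      rw [sub_eq_zero] at hπι
      rw [hg (ι a), hπι, Algebra.algebraMap_eq_smul_one, map_smul, map_one,
        Algebra.smul_def, mul_one]
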